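/- The spider Sp(1^[4], 2^[3]) (four legs of length 1 and three legs of length 2) admits no local antimagic total labeling with exactly 2 distinct vertex weights; hence χ_lat(Sp(1^[4], 2^[3])) = 3. -/

import Mathlib

open Finset

variable {V : Type*} [Fintype V] [DecidableEq V]

/-- The weight of a vertex `u` under the total labeling given by vertex labels `fv`
and edge labels `fe` : `w(u) = f(u) + \sum_{e incident to u} f(e)`. -/
def latWeight (G : SimpleGraph V) [DecidableRel G.Adj]
    (fv : V → ℕ) (fe : Sym2 V → ℕ) (u : V) : ℕ :=
  fv u + ∑ v ∈ G.neighborFinset u, fe s(u, v)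

/-- `fv, fe` together form a bijection from `V(G) ∪ E(G)` onto `{1, …, p + q}`,
where `p` is the order and `q` is the size of `G`. -/
def IsTotalLabeling (G : SimpleGraph V) [DecidableRel G.Adj]
    (fv : V → ℕ) (fe : Sym2 V → ℕ) : Prop :=
  Set.BijOn (Sum.elim fv (fun e : G.edgeSet => fe (e : Sym2 V))) Set.univ
    (Set.Icc 1 (Fintype.card V + G.edgeFinset.card))

/-- A local antimagic total labeling of `G` : a bijective total labeling such that any two
adjacent vertices get distinct weights. -/
def IsLocalAntimagicTotal (G : SimpleGraph V) [DecidableRel G.Adj]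
    (fv : V → ℕ) (fe : Sym2 V → ℕ) : Prop :=
  IsTotalLabeling G fv fe ∧
    ∀ ⦃u v : V⦄, G.Adj u v → latWeight G fv fe u ≠ latWeight G fv fe v

/-- The local antimagic total chromatic number `χ_lat(G)` : the minimum number of distinct
vertex weights taken over all local antimagic total labelings of `G`. -/
noncomputable def chiLat (G : SimpleGraph V) [DecidableRel G.Adj] : ℕ :=
  sInf {c | ∃ fv fe, IsLocalAntimagicTotal G fv fe ∧
    (Finset.univ.image (latWeight G fv fe)).card = c}

instance {W : Type*} (r : W → W → Prop) [DecidableEq W] [DecidableRel r] :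
    DecidableRel (SimpleGraph.fromRel r).Adj :=
  fun a b => decidable_of_iff _ (SimpleGraph.fromRel_adj r a b).symm

/-- Adjacency for the spider `Sp(1^[m], 2^[n])` : the center `x = none` is adjacent to each
leaf `y i = some (Sum.inl i)` and to each `u j = some (Sum.inr (j, false))`, and each `u j`
is adjacent to the leaf `v j = some (Sum.inr (j, true))`. -/
def spider12R (m n : ℕ) :
    Option (Fin m ⊕ Fin n × Bool) → Option (Fin m ⊕ Fin n × Bool) → Bool
  | none, some (Sum.inl _) => true
  | none, some (Sum.inr (_, false)) => true
  | some (Sum.inr (j, false)), some (Sum.inr (j', true)) => decide (j = j')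
  | _, _ => false

/-- The spider `Sp(1^[m], 2^[n])` with `m` legs of length `1` and `n` legs of length `2`. -/
abbrev spider12 (m n : ℕ) : SimpleGraph (Option (Fin m ⊕ Fin n × Bool)) :=
  SimpleGraph.fromRel (fun a b => spider12R m n a b = true)


set_option maxRecDepth 40000
set_option maxHeartbeats 1000000
set_option synthInstance.maxSize 1024

section Aux

abbrev VTs : Type := Option (Fin 4 ⊕ Fin 3 × Bool)
abbrev G4 : SimpleGraph VTs := spider12 4 3
abbrev Dom : Type := VTs ⊕ G4.edgeSet

def vx : VTs := none
def vy (i : Fin 4) : VTs := some (Sum.inl i)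
def vu (j : Fin 3) : VTs := some (Sum.inr (j, false))
def vv (j : Fin 3) : VTs := some (Sum.inr (j, true))

lemma memxy (i : Fin 4) : s(vx, vy i) ∈ G4.edgeSet := by revert i; decide
lemma memxu (j : Fin 3) : s(vx, vu j) ∈ G4.edgeSet := by revert j; decide
lemma memuv (j : Fin 3) : s(vu j, vv j) ∈ G4.edgeSet := by revert j; decide

def dx : Dom := Sum.inl vx
def dy (i : Fin 4) : Dom := Sum.inl (vy i)
def du (j : Fin 3) : Dom := Sum.inl (vu j)
def dv (j : Fin 3) : Dom := Sum.inl (vv j)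
def dxy (i : Fin 4) : Dom := Sum.inr ⟨s(vx, vy i), memxy i⟩
def dxu (j : Fin 3) : Dom := Sum.inr ⟨s(vx, vu j), memxu j⟩
def duv (j : Fin 3) : Dom := Sum.inr ⟨s(vu j, vv j), memuv j⟩

lemma finset_sum_lower (a : ℕ) (s : Finset ℕ) (h : ∀ x ∈ s, a ≤ x) :
    ∑ i ∈ Finset.range s.card, (a + i) ≤ ∑ x ∈ s, x := by
  induction s using Finset.strongInduction with
  | _ s ih =>
    rcases s.eq_empty_or_nonempty with rfl | hs
    · simp
    · have hmax := s.max'_mem hs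
      have hsub : s ⊆ Finset.Icc a (s.max' hs) := fun x hx =>
        Finset.mem_Icc.mpr ⟨h x hx, Finset.le_max' s x hx⟩
      have hcard : s.card ≤ s.max' hs + 1 - a := by
        simpa [Nat.card_Icc] using Finset.card_le_card hsub
      have h1 : 1 ≤ s.card := hs.card_pos
      have ha : a ≤ s.max' hs := h _ hmax
      have key : a + (s.card - 1) ≤ s.max' hs := by omega
      have hIH := ih (s.erase (s.max' hs)) (Finset.erase_ssubset hmax)
        (fun x hx => h x (Finset.mem_of_mem_erase hx))
      rw [← Finset.add_sum_erase _ _ hmax]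
      rw [Finset.card_erase_of_mem hmax] at hIH
      obtain ⟨n, hn⟩ : ∃ n, s.card = n + 1 := ⟨s.card - 1, by omega⟩
      rw [hn] at key hIH ⊢
      simp only [Nat.add_sub_cancel] at key hIH
      rw [Finset.sum_range_succ]
      omega

lemma finset_sum_upper (b : ℕ) (s : Finset ℕ) (h : ∀ x ∈ s, x ≤ b) :
    ∑ x ∈ s, x ≤ ∑ i ∈ Finset.range s.card, (b - i) := by
  induction s using Finset.strongInduction with
  | _ s ih =>
    rcases s.eq_empty_or_nonempty with rfl | hs
    · simp
    · have hmin := s.min'_mem hs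
      have hsub : s ⊆ Finset.Icc (s.min' hs) b := fun x hx =>
        Finset.mem_Icc.mpr ⟨Finset.min'_le s x hx, h x hx⟩
      have hcard : s.card ≤ b + 1 - s.min' hs := by
        simpa [Nat.card_Icc] using Finset.card_le_card hsub
      have h1 : 1 ≤ s.card := hs.card_pos
      have hb : s.min' hs ≤ b := h _ hmin
      have key : s.min' hs ≤ b - (s.card - 1) := by omega
      have hIH := ih (s.erase (s.min' hs)) (Finset.erase_ssubset hmin)
        (fun x hx => h x (Finset.mem_of_mem_erase hx))
      rw [← Finset.add_sum_erase _ _ hmin]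
      rw [Finset.card_erase_of_mem hmin] at hIH
      obtain ⟨n, hn⟩ : ∃ n, s.card = n + 1 := ⟨s.card - 1, by omega⟩
      rw [hn] at key hIH ⊢
      simp only [Nat.add_sub_cancel] at key hIH
      rw [Finset.sum_range_succ]
      omega

lemma mem_sum_lower (a : ℕ) (s : Finset ℕ) (x : ℕ) (hx : x ∈ s)
    (h : ∀ y ∈ s, a ≤ y) :
    x + ∑ i ∈ Finset.range (s.card - 1), (a + i) ≤ ∑ y ∈ s, y := by
  rw [← Finset.add_sum_erase _ _ hx]
  have := finset_sum_lower a (s.erase x) (fun y hy => h y (Finset.mem_of_mem_erase hy))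
  rw [Finset.card_erase_of_mem hx] at this
  omega

lemma mem_sum_upper (b : ℕ) (s : Finset ℕ) (x : ℕ) (hx : x ∈ s)
    (h : ∀ y ∈ s, y ≤ b) :
    ∑ y ∈ s, y ≤ x + ∑ i ∈ Finset.range (s.card - 1), (b - i) := by
  rw [← Finset.add_sum_erase _ _ hx]
  have := finset_sum_upper b (s.erase x) (fun y hy => h y (Finset.mem_of_mem_erase hy))
  rw [Finset.card_erase_of_mem hx] at this
  omega

end Aux

lemma no_two_weights (fv : VTs → ℕ) (fe : Sym2 VTs → ℕ)
    (h : IsLocalAntimagicTotal G4 fv fe) :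
    (Finset.univ.image (latWeight G4 fv fe)).card ≠ 2 := by
  intro hcard2
  obtain ⟨htl, hadj⟩ := h
  unfold IsTotalLabeling at htl
  rw [show Fintype.card VTs + G4.edgeFinset.card = 21 from by decide] at htl
  set g : Dom → ℕ := Sum.elim fv (fun e : G4.edgeSet => fe (e : Sym2 VTs)) with hg
  have hinj : Function.Injective g := fun p q hpq => htl.2.1 trivial trivial hpq
  have hbound : ∀ d : Dom, 1 ≤ g d ∧ g d ≤ 21 := fun d => Set.mem_Icc.mp (htl.1 (Set.mem_univ d))
  have himg : Finset.univ.image g = Finset.Icc 1 21 := by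
    apply Finset.coe_injective
    rw [Finset.coe_image, Finset.coe_univ, Finset.coe_Icc]
    exact htl.image_eq
  -- generic facts about images of finsets of domain elements
  have bndlow : ∀ (D : Finset Dom), ∀ t ∈ D.image g, 1 ≤ t := by
    intro D t ht
    obtain ⟨d, _, rfl⟩ := Finset.mem_image.mp ht
    exact (hbound d).1
  have bndhigh : ∀ (D : Finset Dom), ∀ t ∈ D.image g, t ≤ 21 := by
    intro D t ht
    obtain ⟨d, _, rfl⟩ := Finset.mem_image.mp ht
    exact (hbound d).2
  have hnm : ∀ (D : Finset Dom) (d : Dom), d ∉ D → g d ∉ D.image g := by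
    intro D d hd hmem
    obtain ⟨d', hd', he⟩ := Finset.mem_image.mp hmem
    exact hd (hinj he ▸ hd')
  -- the total sum of all labels
  have htotal : fv vx + (fv (vy 0) + (fv (vy 1) + (fv (vy 2) + (fv (vy 3) +
      (fv (vu 0) + (fv (vu 1) + (fv (vu 2) + (fv (vv 0) + (fv (vv 1) + (fv (vv 2) +
      (fe s(vx, vy 0) + (fe s(vx, vy 1) + (fe s(vx, vy 2) + (fe s(vx, vy 3) +
      (fe s(vx, vu 0) + (fe s(vx, vu 1) + (fe s(vx, vu 2) +
      (fe s(vu 0, vv 0) + (fe s(vu 1, vv 1) + fe s(vu 2, vv 2)))))))))))))))))))) = 231 := by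
    have h1 : ∑ t ∈ Finset.univ.image g, t = ∑ d ∈ (Finset.univ : Finset Dom), g d :=
      Finset.sum_image (fun x _ y _ hxy => hinj hxy)
    rw [himg] at h1
    have h2 : (∑ x ∈ Finset.Icc 1 21, x) = 231 := by decide
    have hU : (Finset.univ : Finset Dom) =
        {dx, dy 0, dy 1, dy 2, dy 3, du 0, du 1, du 2, dv 0, dv 1, dv 2,
         dxy 0, dxy 1, dxy 2, dxy 3, dxu 0, dxu 1, dxu 2, duv 0, duv 1, duv 2} := by
      symm
      apply Finset.eq_univ_of_card
      rw [Fintype.card_sum, ← SimpleGraph.edgeFinset_card,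
        show Fintype.card VTs + G4.edgeFinset.card = 21 from by decide]
      decide
    rw [hU] at h1
    exact h1.symm.trans h2
  -- neighborhoods and weight expansions
  have hNx : G4.neighborFinset vx = {vy 0, vy 1, vy 2, vy 3, vu 0, vu 1, vu 2} := by decide
  have eqwx : latWeight G4 fv fe vx
      = fv vx + (fe s(vx, vy 0) + (fe s(vx, vy 1) + (fe s(vx, vy 2) + (fe s(vx, vy 3) +
        (fe s(vx, vu 0) + (fe s(vx, vu 1) + fe s(vx, vu 2))))))) := by
    rw [latWeight, hNx]; rfl
  have hNy0 : G4.neighborFinset (vy 0) = {vx} := by decide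
  have hNy1 : G4.neighborFinset (vy 1) = {vx} := by decide
  have hNy2 : G4.neighborFinset (vy 2) = {vx} := by decide
  have hNy3 : G4.neighborFinset (vy 3) = {vx} := by decide
  have eqy0 : latWeight G4 fv fe (vy 0) = fv (vy 0) + fe s(vy 0, vx) := by rw [latWeight, hNy0]; rfl
  have eqy1 : latWeight G4 fv fe (vy 1) = fv (vy 1) + fe s(vy 1, vx) := by rw [latWeight, hNy1]; rfl
  have eqy2 : latWeight G4 fv fe (vy 2) = fv (vy 2) + fe s(vy 2, vx) := by rw [latWeight, hNy2]; rfl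
  have eqy3 : latWeight G4 fv fe (vy 3) = fv (vy 3) + fe s(vy 3, vx) := by rw [latWeight, hNy3]; rfl
  rw [show s(vy 0, vx) = s(vx, vy 0) from Sym2.eq_swap] at eqy0
  rw [show s(vy 1, vx) = s(vx, vy 1) from Sym2.eq_swap] at eqy1
  rw [show s(vy 2, vx) = s(vx, vy 2) from Sym2.eq_swap] at eqy2
  rw [show s(vy 3, vx) = s(vx, vy 3) from Sym2.eq_swap] at eqy3
  have hNu0 : G4.neighborFinset (vu 0) = {vx, vv 0} := by decide
  have hNu1 : G4.neighborFinset (vu 1) = {vx, vv 1} := by decide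
  have hNu2 : G4.neighborFinset (vu 2) = {vx, vv 2} := by decide
  have equ0 : latWeight G4 fv fe (vu 0) = fv (vu 0) + (fe s(vu 0, vx) + fe s(vu 0, vv 0)) := by
    rw [latWeight, hNu0]; rfl
  have equ1 : latWeight G4 fv fe (vu 1) = fv (vu 1) + (fe s(vu 1, vx) + fe s(vu 1, vv 1)) := by
    rw [latWeight, hNu1]; rfl
  have equ2 : latWeight G4 fv fe (vu 2) = fv (vu 2) + (fe s(vu 2, vx) + fe s(vu 2, vv 2)) := by
    rw [latWeight, hNu2]; rfl
  rw [show s(vu 0, vx) = s(vx, vu 0) from Sym2.eq_swap] at equ0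
  rw [show s(vu 1, vx) = s(vx, vu 1) from Sym2.eq_swap] at equ1
  rw [show s(vu 2, vx) = s(vx, vu 2) from Sym2.eq_swap] at equ2
  have hNv0 : G4.neighborFinset (vv 0) = {vu 0} := by decide
  have hNv1 : G4.neighborFinset (vv 1) = {vu 1} := by decide
  have hNv2 : G4.neighborFinset (vv 2) = {vu 2} := by decide
  have eqv0 : latWeight G4 fv fe (vv 0) = fv (vv 0) + fe s(vv 0, vu 0) := by rw [latWeight, hNv0]; rfl
  have eqv1 : latWeight G4 fv fe (vv 1) = fv (vv 1) + fe s(vv 1, vu 1) := by rw [latWeight, hNv1]; rfl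
  have eqv2 : latWeight G4 fv fe (vv 2) = fv (vv 2) + fe s(vv 2, vu 2) := by rw [latWeight, hNv2]; rfl
  rw [show s(vv 0, vu 0) = s(vu 0, vv 0) from Sym2.eq_swap] at eqv0
  rw [show s(vv 1, vu 1) = s(vu 1, vv 1) from Sym2.eq_swap] at eqv1
  rw [show s(vv 2, vu 2) = s(vu 2, vv 2) from Sym2.eq_swap] at eqv2
  -- the two weights
  obtain ⟨A, hA⟩ : ∃ A, latWeight G4 fv fe vx = A := ⟨_, rfl⟩
  obtain ⟨B, hB⟩ : ∃ B, latWeight G4 fv fe (vy 0) = B := ⟨_, rfl⟩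
  have hAdjxy : ∀ i : Fin 4, G4.Adj vx (vy i) := by decide
  have hAdjxu : ∀ j : Fin 3, G4.Adj vx (vu j) := by decide
  have hAdjuv : ∀ j : Fin 3, G4.Adj (vu j) (vv j) := by decide
  have hAB : A ≠ B := by
    rw [← hA, ← hB]; exact hadj (hAdjxy 0)
  have him2 : Finset.univ.image (latWeight G4 fv fe) = {A, B} := by
    refine (Finset.eq_of_subset_of_card_le ?_ ?_).symm
    · refine Finset.insert_subset ?_ (Finset.singleton_subset_iff.mpr ?_)
      · rw [← hA]; exact Finset.mem_image_of_mem _ (Finset.mem_univ vx)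
      · rw [← hB]; exact Finset.mem_image_of_mem _ (Finset.mem_univ (vy 0))
    · rw [hcard2, Finset.card_insert_of_notMem (by simpa using hAB), Finset.card_singleton]
  have hwz : ∀ z : VTs, latWeight G4 fv fe z = A ∨ latWeight G4 fv fe z = B := by
    intro z
    have hz : latWeight G4 fv fe z ∈ Finset.univ.image (latWeight G4 fv fe) :=
      Finset.mem_image_of_mem _ (Finset.mem_univ z)
    rw [him2] at hz
    simpa using hz
  have hyB : ∀ i : Fin 4, latWeight G4 fv fe (vy i) = B := by
    intro i
    refine (hwz (vy i)).resolve_left fun hh => hadj (hAdjxy i) ?_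
    rw [hA, hh]
  have huB : ∀ j : Fin 3, latWeight G4 fv fe (vu j) = B := by
    intro j
    refine (hwz (vu j)).resolve_left fun hh => hadj (hAdjxu j) ?_
    rw [hA, hh]
  have hvA : ∀ j : Fin 3, latWeight G4 fv fe (vv j) = A := by
    intro j
    refine (hwz (vv j)).resolve_right fun hh => hadj (hAdjuv j) ?_
    rw [huB j, hh]
  -- numeric weight equations
  have EA : fv vx + (fe s(vx, vy 0) + (fe s(vx, vy 1) + (fe s(vx, vy 2) + (fe s(vx, vy 3) +
      (fe s(vx, vu 0) + (fe s(vx, vu 1) + fe s(vx, vu 2))))))) = A := by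
    rw [← eqwx]; exact hA
  have EY0 : fv (vy 0) + fe s(vx, vy 0) = B := by rw [← eqy0]; exact hyB 0
  have EY1 : fv (vy 1) + fe s(vx, vy 1) = B := by rw [← eqy1]; exact hyB 1
  have EY2 : fv (vy 2) + fe s(vx, vy 2) = B := by rw [← eqy2]; exact hyB 2
  have EY3 : fv (vy 3) + fe s(vx, vy 3) = B := by rw [← eqy3]; exact hyB 3
  have EU0 : fv (vu 0) + (fe s(vx, vu 0) + fe s(vu 0, vv 0)) = B := by rw [← equ0]; exact huB 0
  have EU1 : fv (vu 1) + (fe s(vx, vu 1) + fe s(vu 1, vv 1)) = B := by rw [← equ1]; exact huB 1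
  have EU2 : fv (vu 2) + (fe s(vx, vu 2) + fe s(vu 2, vv 2)) = B := by rw [← equ2]; exact huB 2
  have EV0 : fv (vv 0) + fe s(vu 0, vv 0) = A := by rw [← eqv0]; exact hvA 0
  have EV1 : fv (vv 1) + fe s(vu 1, vv 1) = A := by rw [← eqv1]; exact hvA 1
  have EV2 : fv (vv 2) + fe s(vu 2, vv 2) = A := by rw [← eqv2]; exact hvA 2
  -- the 8 labels around the center
  have c8 : (({dx, dxy 0, dxy 1, dxy 2, dxy 3, dxu 0, dxu 1, dxu 2} : Finset Dom).image g).card = 8 := by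
    rw [Finset.card_image_of_injective _ hinj]; decide
  have s8sum : ∑ t ∈ ({dx, dxy 0, dxy 1, dxy 2, dxy 3, dxu 0, dxu 1, dxu 2} : Finset Dom).image g, t
      = A := Eq.trans (Finset.sum_image (fun x _ y _ hxy => hinj hxy)) EA
  have hA36 : 36 ≤ A := by
    have h := finset_sum_lower 1 _ (bndlow ({dx, dxy 0, dxy 1, dxy 2, dxy 3, dxu 0, dxu 1, dxu 2} : Finset Dom))
    rw [c8, s8sum] at h
    norm_num [Finset.sum_range_succ] at h
    exact h
  -- the 6 labels on v-vertices and uv-edges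
  have c6 : (({dv 0, dv 1, dv 2, duv 0, duv 1, duv 2} : Finset Dom).image g).card = 6 := by
    rw [Finset.card_image_of_injective _ hinj]; decide
  have s6sum : ∑ t ∈ ({dv 0, dv 1, dv 2, duv 0, duv 1, duv 2} : Finset Dom).image g, t
      = fv (vv 0) + (fv (vv 1) + (fv (vv 2) +
        (fe s(vu 0, vv 0) + (fe s(vu 1, vv 1) + fe s(vu 2, vv 2))))) :=
    Finset.sum_image (fun x _ y _ hxy => hinj hxy)
  have hA37 : A ≤ 37 := by
    have h := finset_sum_upper 21 _ (bndhigh ({dv 0, dv 1, dv 2, duv 0, duv 1, duv 2} : Finset Dom))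
    rw [c6, s6sum] at h
    norm_num [Finset.sum_range_succ] at h
    clear * - h EV0 EV1 EV2
    omega
  have hcases : A = 36 ∨ A = 37 := by clear * - hA36 hA37; omega
  rcases hcases with rfl | rfl
  · -- case A = 36 : the 8 center labels are exactly {1,…,8}
    have hS8 : (({dx, dxy 0, dxy 1, dxy 2, dxy 3, dxu 0, dxu 1, dxu 2} : Finset Dom).image g)
        = Finset.Icc 1 8 := by
      refine Finset.eq_of_subset_of_card_le (fun t ht => ?_) (by rw [c8]; simp [Nat.card_Icc])
      have h1 := mem_sum_lower 1 _ t ht (bndlow _)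
      rw [c8, s8sum] at h1
      norm_num [Finset.sum_range_succ] at h1
      exact Finset.mem_Icc.mpr ⟨bndlow _ t ht, by clear * - h1; omega⟩
    have hu9 : ∀ j : Fin 3, 9 ≤ fv (vu j) := by
      intro j
      have h := hnm _ (du j) (show du j ∉ ({dx, dxy 0, dxy 1, dxy 2, dxy 3, dxu 0, dxu 1, dxu 2} : Finset Dom) from by fin_cases j <;> decide)
      rw [hS8] at h
      replace h : fv (vu j) ∉ Finset.Icc 1 8 := h
      rw [Finset.mem_Icc] at h
      have hb : 1 ≤ fv (vu j) ∧ fv (vu j) ≤ 21 := hbound (du j)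
      clear * - h hb
      omega
    have hp8 : ∀ i : Fin 4, fe s(vx, vy i) ≤ 8 := by
      intro i
      have h : g (dxy i) ∈ (({dx, dxy 0, dxy 1, dxy 2, dxy 3, dxu 0, dxu 1, dxu 2} : Finset Dom).image g) :=
        Finset.mem_image_of_mem g (show dxy i ∈ _ from by fin_cases i <;> decide)
      rw [hS8] at h
      replace h : fe s(vx, vy i) ∈ Finset.Icc 1 8 := h
      rw [Finset.mem_Icc] at h
      exact h.2
    -- sums of u-labels, xu-labels, v-labels
    have c3u : (({du 0, du 1, du 2} : Finset Dom).image g).card = 3 := by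
      rw [Finset.card_image_of_injective _ hinj]; decide
    have s3u : ∑ t ∈ ({du 0, du 1, du 2} : Finset Dom).image g, t
        = fv (vu 0) + (fv (vu 1) + fv (vu 2)) :=
      Finset.sum_image (fun x _ y _ hxy => hinj hxy)
    have l3u : 30 ≤ fv (vu 0) + (fv (vu 1) + fv (vu 2)) := by
      have h := finset_sum_lower 9 (({du 0, du 1, du 2} : Finset Dom).image g) ?_
      · rw [c3u, s3u] at h
        norm_num [Finset.sum_range_succ] at h
        clear * - h
        omega
      · intro t ht
        obtain ⟨d, hd, rfl⟩ := Finset.mem_image.mp ht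
        simp only [Finset.mem_insert, Finset.mem_singleton] at hd
        rcases hd with rfl | rfl | rfl
        · exact hu9 0
        · exact hu9 1
        · exact hu9 2
    have c3q : (({dxu 0, dxu 1, dxu 2} : Finset Dom).image g).card = 3 := by
      rw [Finset.card_image_of_injective _ hinj]; decide
    have s3q : ∑ t ∈ ({dxu 0, dxu 1, dxu 2} : Finset Dom).image g, t
        = fe s(vx, vu 0) + (fe s(vx, vu 1) + fe s(vx, vu 2)) :=
      Finset.sum_image (fun x _ y _ hxy => hinj hxy)
    have l3q : 6 ≤ fe s(vx, vu 0) + (fe s(vx, vu 1) + fe s(vx, vu 2)) := by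
      have h := finset_sum_lower 1 _ (bndlow ({dxu 0, dxu 1, dxu 2} : Finset Dom))
      rw [c3q, s3q] at h
      norm_num [Finset.sum_range_succ] at h
      clear * - h
      omega
    have c3w : (({dv 0, dv 1, dv 2} : Finset Dom).image g).card = 3 := by
      rw [Finset.card_image_of_injective _ hinj]; decide
    have s3w : ∑ t ∈ ({dv 0, dv 1, dv 2} : Finset Dom).image g, t
        = fv (vv 0) + (fv (vv 1) + fv (vv 2)) :=
      Finset.sum_image (fun x _ y _ hxy => hinj hxy)
    have l3w : fv (vv 0) + (fv (vv 1) + fv (vv 2)) ≤ 60 := by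
      have h := finset_sum_upper 21 _ (bndhigh ({dv 0, dv 1, dv 2} : Finset Dom))
      rw [c3w, s3w] at h
      norm_num [Finset.sum_range_succ] at h
      clear * - h
      omega
    have hB28 : 28 ≤ B := by
      clear * - EU0 EU1 EU2 EV0 EV1 EV2 l3u l3q l3w
      omega
    have hy20 : ∀ i : Fin 4, 20 ≤ fv (vy i) := by
      intro i
      fin_cases i
      · show 20 ≤ fv (vy 0)
        have h8 := hp8 0; clear * - h8 EY0 hB28; omega
      · show 20 ≤ fv (vy 1)
        have h8 := hp8 1; clear * - h8 EY1 hB28; omega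
      · show 20 ≤ fv (vy 2)
        have h8 := hp8 2; clear * - h8 EY2 hB28; omega
      · show 20 ≤ fv (vy 3)
        have h8 := hp8 3; clear * - h8 EY3 hB28; omega
    -- the four y-labels are ≥ 20, contradiction
    have c4y : (({dy 0, dy 1, dy 2, dy 3} : Finset Dom).image g).card = 4 := by
      rw [Finset.card_image_of_injective _ hinj]; decide
    obtain ⟨SY, hSY⟩ : ∃ n, ∑ t ∈ ({dy 0, dy 1, dy 2, dy 3} : Finset Dom).image g, t = n := ⟨_, rfl⟩
    have lY : 86 ≤ SY := by
      have h := finset_sum_lower 20 (({dy 0, dy 1, dy 2, dy 3} : Finset Dom).image g) ?_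
      · rw [c4y, hSY] at h
        norm_num [Finset.sum_range_succ] at h
        clear * - h
        omega
      · intro t ht
        obtain ⟨d, hd, rfl⟩ := Finset.mem_image.mp ht
        simp only [Finset.mem_insert, Finset.mem_singleton] at hd
        rcases hd with rfl | rfl | rfl | rfl
        · exact hy20 0
        · exact hy20 1
        · exact hy20 2
        · exact hy20 3
    have uY : SY ≤ 78 := by
      have h := finset_sum_upper 21 _ (bndhigh ({dy 0, dy 1, dy 2, dy 3} : Finset Dom))
      rw [c4y, hSY] at h
      norm_num [Finset.sum_range_succ] at h
      clear * - h
      omega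
    omega
  · -- case A = 37 : the 6 labels on v-vertices and uv-edges are exactly {16,…,21}
    have h111 : ∑ t ∈ ({dv 0, dv 1, dv 2, duv 0, duv 1, duv 2} : Finset Dom).image g, t = 111 := by
      rw [s6sum]; clear * - EV0 EV1 EV2; omega
    have hS6 : (({dv 0, dv 1, dv 2, duv 0, duv 1, duv 2} : Finset Dom).image g)
        = Finset.Icc 16 21 := by
      refine Finset.eq_of_subset_of_card_le (fun t ht => ?_) (by rw [c6]; simp [Nat.card_Icc])
      have h1 := mem_sum_upper 21 _ t ht (bndhigh _)
      rw [c6, h111] at h1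
      norm_num [Finset.sum_range_succ] at h1
      refine Finset.mem_Icc.mpr ⟨?_, bndhigh _ t ht⟩
      clear * - h1
      omega
    -- y-labels are ≤ 15
    have hy15 : ∀ i : Fin 4, fv (vy i) ≤ 15 := by
      intro i
      have h := hnm _ (dy i) (show dy i ∉ ({dv 0, dv 1, dv 2, duv 0, duv 1, duv 2} : Finset Dom) from by fin_cases i <;> decide)
      rw [hS6] at h
      replace h : fv (vy i) ∉ Finset.Icc 16 21 := h
      rw [Finset.mem_Icc] at h
      have hb : 1 ≤ fv (vy i) ∧ fv (vy i) ≤ 21 := hbound (dy i)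
      clear * - h hb
      omega
    -- center labels are ≤ 9
    have hc9 : ∀ t ∈ (({dx, dxy 0, dxy 1, dxy 2, dxy 3, dxu 0, dxu 1, dxu 2} : Finset Dom).image g), t ≤ 9 := by
      intro t ht
      have h1 := mem_sum_lower 1 _ t ht (bndlow _)
      rw [c8, s8sum] at h1
      norm_num [Finset.sum_range_succ] at h1
      clear * - h1
      omega
    have hX9 : fv vx ≤ 9 := by
      have h := hc9 _ (Finset.mem_image_of_mem g (show dx ∈ _ from by decide))
      exact h
    have hP9 : ∀ i : Fin 4, fe s(vx, vy i) ≤ 9 := by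
      intro i
      have h := hc9 _ (Finset.mem_image_of_mem g (show dxy i ∈ _ from by fin_cases i <;> decide))
      exact h
    -- uv-labels are ≥ 16, so their sum is ≥ 51
    have hr16 : ∀ j : Fin 3, 16 ≤ fe s(vu j, vv j) := by
      intro j
      have h : g (duv j) ∈ (({dv 0, dv 1, dv 2, duv 0, duv 1, duv 2} : Finset Dom).image g) :=
        Finset.mem_image_of_mem g (show duv j ∈ _ from by fin_cases j <;> decide)
      rw [hS6] at h
      replace h : fe s(vu j, vv j) ∈ Finset.Icc 16 21 := h
      exact (Finset.mem_Icc.mp h).1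
    have c3r : (({duv 0, duv 1, duv 2} : Finset Dom).image g).card = 3 := by
      rw [Finset.card_image_of_injective _ hinj]; decide
    have s3r : ∑ t ∈ ({duv 0, duv 1, duv 2} : Finset Dom).image g, t
        = fe s(vu 0, vv 0) + (fe s(vu 1, vv 1) + fe s(vu 2, vv 2)) :=
      Finset.sum_image (fun x _ y _ hxy => hinj hxy)
    have l3r : 51 ≤ fe s(vu 0, vv 0) + (fe s(vu 1, vv 1) + fe s(vu 2, vv 2)) := by
      have h := finset_sum_lower 16 (({duv 0, duv 1, duv 2} : Finset Dom).image g) ?_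
      · rw [c3r, s3r] at h
        norm_num [Finset.sum_range_succ] at h
        clear * - h
        omega
      · intro t ht
        obtain ⟨d, hd, rfl⟩ := Finset.mem_image.mp ht
        simp only [Finset.mem_insert, Finset.mem_singleton] at hd
        rcases hd with rfl | rfl | rfl
        · exact hr16 0
        · exact hr16 1
        · exact hr16 2
    -- the two leaf labels y0 and y1 would both have to be 15
    have hY01 : fv (vy 0) ≠ fv (vy 1) := by
      intro hh
      have hd : dy 0 = dy 1 := hinj hh
      exact absurd hd (by decide)
    have h0 := hy15 0
    have h1 := hy15 1
    have hp0 := hP9 0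
    have hp1 := hP9 1
    clear * - htotal EA EV0 EV1 EV2 EY0 EY1 EY2 EY3 EU0 EU1 EU2 l3r hX9 h0 h1 hp0 hp1 hY01
    omega

def myfv : VTs → ℕ
  | none => 19
  | some (Sum.inl 0) => 7
  | some (Sum.inl 1) => 8
  | some (Sum.inl 2) => 18
  | some (Sum.inl 3) => 10
  | some (Sum.inr (0, false)) => 11
  | some (Sum.inr (1, false)) => 3
  | some (Sum.inr (2, false)) => 16
  | some (Sum.inr (0, true)) => 17
  | some (Sum.inr (1, true)) => 20
  | some (Sum.inr (2, true)) => 21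

def myfe (e : Sym2 VTs) : ℕ :=
  if e = s(none, some (Sum.inl 0)) then 15
  else if e = s(none, some (Sum.inl 1)) then 14
  else if e = s(none, some (Sum.inl 2)) then 4
  else if e = s(none, some (Sum.inl 3)) then 12
  else if e = s(none, some (Sum.inr (0, false))) then 2
  else if e = s(none, some (Sum.inr (1, false))) then 13
  else if e = s(none, some (Sum.inr (2, false))) then 1
  else if e = s(some (Sum.inr (0, false)), some (Sum.inr (0, true))) then 9
  else if e = s(some (Sum.inr (1, false)), some (Sum.inr (1, true))) then 6
  else if e = s(some (Sum.inr (2, false)), some (Sum.inr (2, true))) then 5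
  else 0

lemma my_total : IsTotalLabeling G4 myfv myfe := by
  unfold IsTotalLabeling
  rw [show Fintype.card VTs + G4.edgeFinset.card = 21 from by decide]
  have himg : Finset.univ.image
      (Sum.elim myfv (fun e : G4.edgeSet => myfe (e : Sym2 VTs))) = Finset.Icc 1 21 := by decide
  have hinjOn : Set.InjOn (Sum.elim myfv (fun e : G4.edgeSet => myfe (e : Sym2 VTs)))
      ↑(Finset.univ : Finset (VTs ⊕ G4.edgeSet)) := by
    rw [Finset.card_image_iff.symm, himg]
    decide
  have himage : (Sum.elim myfv (fun e : G4.edgeSet => myfe (e : Sym2 VTs))) '' Set.univ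
      = Set.Icc 1 21 := by
    rw [← Finset.coe_univ, ← Finset.coe_image, himg, Finset.coe_Icc]
  refine ⟨fun d _ => by rw [← himage]; exact ⟨d, trivial, rfl⟩, ?_, himage.ge⟩
  rw [← Finset.coe_univ]
  exact hinjOn

lemma my_lat : IsLocalAntimagicTotal G4 myfv myfe :=
  ⟨my_total, by decide⟩

lemma my_card : (Finset.univ.image (latWeight G4 myfv myfe)).card = 3 := by decide

/-- The spider `Sp(1^[4], 2^[3])` admits no local antimagic total labeling with exactly
`2` distinct vertex weights; hence its local antimagic total chromatic number is `3`. -/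
theorem chiLat_spider12_four_three :
    (∀ fv fe, IsLocalAntimagicTotal (spider12 4 3) fv fe →
      (Finset.univ.image (latWeight (spider12 4 3) fv fe)).card ≠ 2) ∧
    chiLat (spider12 4 3) = 3 := by
  refine ⟨fun fv fe h => no_two_weights fv fe h, ?_⟩
  unfold chiLat
  have h3 : (3 : ℕ) ∈ {c | ∃ fv fe, IsLocalAntimagicTotal (spider12 4 3) fv fe ∧
      (Finset.univ.image (latWeight (spider12 4 3) fv fe)).card = c} :=
    ⟨myfv, myfe, my_lat, my_card⟩
  refine le_antisymm (Nat.sInf_le h3) (le_csInf ⟨3, h3⟩ ?_)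
  rintro c ⟨fv, fe, hl, rfl⟩
  have h2 := no_two_weights fv fe hl
  have h0 : (Finset.univ.image (latWeight G4 fv fe)).card ≠ 0 :=
    Finset.card_ne_zero_of_mem (Finset.mem_image_of_mem _ (Finset.mem_univ vx))
  have h1 : (Finset.univ.image (latWeight G4 fv fe)).card ≠ 1 := by
    intro hc
    have hmem1 : latWeight G4 fv fe vx ∈ Finset.univ.image (latWeight G4 fv fe) :=
      Finset.mem_image_of_mem _ (Finset.mem_univ vx)
    have hmem2 : latWeight G4 fv fe (vy 0) ∈ Finset.univ.image (latWeight G4 fv fe) :=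
      Finset.mem_image_of_mem _ (Finset.mem_univ (vy 0))
    have heq := Finset.card_le_one.mp (le_of_eq hc) _ hmem1 _ hmem2
    exact hl.2 (show G4.Adj vx (vy 0) from by decide) heq
  show 3 ≤ (Finset.univ.image (latWeight G4 fv fe)).card
  clear * - h0 h1 h2
  omega
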